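/- Let Q ⊆ ℂ be an unshielded continuum with Riemann map Ψ as in the context, and let A, B ⊆ Q. Suppose K₁ is a ray-compactum which ray-separates A and B, and K₂ is a ray-compactum disjoint from B which ray-separates A and K₁. Then K₂ ray-separates A and B. -/

import Mathlib

open Set Filter Topology Metric

noncomputable section


/-- The point `e^{2πiα}` on the unit circle corresponding to an angle `α ∈ ℝ/ℤ`. -/
def circlePoint (α : AddCircle (1 : ℝ)) : ℂ := (AddCircle.toCircle α : ℂ)

/-- The basin of infinity of a compact set `Q ⊆ ℂ`: the union of the unbounded
connected components of `ℂ ∖ Q` (for `Q` a continuum there is exactly one). -/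
def basin (Q : Set ℂ) : Set ℂ :=
  {z | z ∉ Q ∧ ¬ Bornology.IsBounded (connectedComponentIn Qᶜ z)}

/-- `Q` is an unshielded continuum: a compact connected nonempty subset of `ℂ`
which coincides with the boundary of its basin of infinity. -/
def Unshielded (Q : Set ℂ) : Prop :=
  IsCompact Q ∧ IsConnected Q ∧ Q = frontier (basin Q)

/-- `Ψ` is a Riemann map for the basin of infinity of `Q`: a holomorphic bijection
from `{z : |z| > 1}` onto the basin of infinity. -/
def RiemannMap (Q : Set ℂ) (Ψ : ℂ → ℂ) : Prop :=
  DifferentiableOn ℂ Ψ {z | 1 < ‖z‖} ∧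
  Set.BijOn Ψ {z | 1 < ‖z‖} (basin Q)

/-- The impression of the external angle `α`. -/
def impression (Ψ : ℂ → ℂ) (α : AddCircle (1 : ℝ)) : Set ℂ :=
  {w | ∃ z : ℕ → ℂ, (∀ n, 1 < ‖z n‖) ∧
        Tendsto z atTop (𝓝 (circlePoint α)) ∧
        Tendsto (fun n => Ψ (z n)) atTop (𝓝 w)}

/-- The external ray of angle `α`. -/
def extRay (Ψ : ℂ → ℂ) (α : AddCircle (1 : ℝ)) : Set ℂ :=
  Ψ '' {z | ∃ r : ℝ, 1 < r ∧ z = (r : ℂ) * circlePoint α}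

/-- The principal set of the external angle `α`. -/
def principalSet (Ψ : ℂ → ℂ) (α : AddCircle (1 : ℝ)) : Set ℂ :=
  closure (extRay Ψ α) \ extRay Ψ α

/-- A closed equivalence relation (its graph, within `Q × Q`, is closed) such that
every impression is contained in a single equivalence class. -/
structure IsClosedEquivRespImp (Q : Set ℂ) (Ψ : ℂ → ℂ) (r : ℂ → ℂ → Prop) : Prop where
  equivalence : Equivalence r
  closedGraph : IsClosed {p : ℂ × ℂ | p.1 ∈ Q ∧ p.2 ∈ Q ∧ r p.1 p.2}
  resp : ∀ α : AddCircle (1 : ℝ), ∀ x ∈ impression Ψ α, ∀ y ∈ impression Ψ α, r x y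

/-- The relation `≈₀`: the intersection of all closed equivalence relations on `Q`
in which every impression is contained in a single class. -/
def finestRel (Q : Set ℂ) (Ψ : ℂ → ℂ) (x y : ℂ) : Prop :=
  ∀ r : ℂ → ℂ → Prop, IsClosedEquivRespImp Q Ψ r → r x y

/-- The partition `𝒟` of `Q` whose elements are the connected components of the
`≈₀`-classes; its elements are the fibers of the finest monotone map of `Q`
onto a locally connected continuum. -/
def finestPartition (Q : Set ℂ) (Ψ : ℂ → ℂ) : Set (Set ℂ) :=
  {D | ∃ x ∈ Q, D = connectedComponentIn {y ∈ Q | finestRel Q Ψ x y} x}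

/-- A ray-compactum in `Q`: a compact subset of `Q` together with a closed set of
angles whose principal sets it contains and in the union of whose impressions
it is contained. -/
structure RayCompactum (Q : Set ℂ) (Ψ : ℂ → ℂ) where
  carrier : Set ℂ
  angles : Set (AddCircle (1 : ℝ))
  carrier_subset : carrier ⊆ Q
  isCompact_carrier : IsCompact carrier
  isClosed_angles : IsClosed angles
  principal_subset : ∀ θ ∈ angles, principalSet Ψ θ ⊆ carrier
  subset_impressions : carrier ⊆ ⋃ θ ∈ angles, impression Ψ θ

/-- `C̃ = C ∪ ⋃_{θ ∈ Θ(C)} R_θ`. -/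
def RayCompactum.tilde {Q : Set ℂ} {Ψ : ℂ → ℂ} (C : RayCompactum Q Ψ) : Set ℂ :=
  C.carrier ∪ ⋃ θ ∈ C.angles, extRay Ψ θ

/-- A ray-compactum `C` ray-separates the sets `A` and `B`. -/
def RaySeparates {Q : Set ℂ} {Ψ : ℂ → ℂ} (C : RayCompactum Q Ψ) (A B : Set ℂ) : Prop :=
  C.carrier ∩ (A ∪ B) = ∅ ∧
  ∀ z ∈ closure (basin Q) \ C.tilde,
    ¬ ((connectedComponentIn (closure (basin Q) \ C.tilde) z ∩ A).Nonempty ∧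
       (connectedComponentIn (closure (basin Q) \ C.tilde) z ∩ B).Nonempty)

/-- A ray-compactum `C` ray-separates a set `X` if it ray-separates some
pair of (distinct) points of `X`. -/
def RaySeparatesSet {Q : Set ℂ} {Ψ : ℂ → ℂ} (C : RayCompactum Q Ψ) (X : Set ℂ) : Prop :=
  ∃ x ∈ X, ∃ y ∈ X, x ≠ y ∧ RaySeparates C {x} {y}

/-- A well-slicing family for a continuum `X ⊆ Q`. -/
structure IsWellSlicing {Q : Set ℂ} {Ψ : ℂ → ℂ}
    (𝒞 : Set (RayCompactum Q Ψ)) (X : Set ℂ) : Prop where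
  nontrivial : ∃ C₁ ∈ 𝒞, ∃ C₂ ∈ 𝒞, C₁ ≠ C₂
  pairwiseDisjoint : ∀ C₁ ∈ 𝒞, ∀ C₂ ∈ 𝒞, C₁ ≠ C₂ → Disjoint C₁.carrier C₂.carrier
  separates : ∀ C ∈ 𝒞, RaySeparatesSet C X
  middle : ∀ C₁ ∈ 𝒞, ∀ C₂ ∈ 𝒞, C₁ ≠ C₂ → ∃ C₃ ∈ 𝒞, RaySeparates C₃ C₁.carrier C₂.carrier

private lemma abs_circlePoint (α : AddCircle (1 : ℝ)) : ‖circlePoint α‖ = 1 :=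
  Circle.norm_coe _

private lemma circlePoint_injective : Function.Injective circlePoint :=
  fun _ _ h => AddCircle.injective_toCircle one_ne_zero (Circle.coe_injective h)

private lemma isPreconnected_extSet {r : ℝ} (hr : 0 ≤ r) :
    IsPreconnected {z : ℂ | r < ‖z‖} := by
  have key : {z : ℂ | r < ‖z‖}
      = (fun p : ℝ × ℂ => p.1 • p.2) '' (Ioi r ×ˢ sphere (0:ℂ) 1) := by
    ext z
    simp only [mem_image, mem_prod, mem_Ioi, mem_sphere_iff_norm, sub_zero, mem_setOf_eq,
      Prod.exists]
    constructor
    · intro hz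
      have h0 : (0:ℝ) < ‖z‖ := lt_of_le_of_lt hr hz
      refine ⟨‖z‖, (‖z‖)⁻¹ • z, ⟨hz, ?_⟩, ?_⟩
      · rw [norm_smul, Real.norm_eq_abs, abs_of_pos (inv_pos.2 h0), inv_mul_cancel₀ h0.ne']
      · rw [smul_smul, mul_inv_cancel₀ h0.ne', one_smul]
    · rintro ⟨t, s, ⟨ht, hs⟩, rfl⟩
      have habs : ‖t • s‖ = t := by
        rw [norm_smul, Real.norm_eq_abs, hs, mul_one,
          abs_of_pos (lt_of_le_of_lt hr ht)]
      rw [habs]; exact ht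
  rw [key]
  exact ((isPreconnected_Ioi).prod (isPreconnected_sphere
    (by rw [Complex.rank_real_complex]; norm_num) 0 1)).image _
    (continuous_fst.smul continuous_snd).continuousOn


private lemma isOpen_basin {Q : Set ℂ} (hQ : IsClosed Q) : IsOpen (basin Q) := by
  rw [isOpen_iff_mem_nhds]
  intro z hz
  have hzc : z ∈ Qᶜ := hz.1
  have hV : IsOpen (connectedComponentIn Qᶜ z) := hQ.isOpen_compl.connectedComponentIn
  refine Filter.mem_of_superset (hV.mem_nhds (mem_connectedComponentIn hzc)) fun y hy => ?_
  refine ⟨connectedComponentIn_subset _ _ hy, ?_⟩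
  rw [← connectedComponentIn_eq hy]
  exact hz.2

private lemma raySet_subset_D (α : AddCircle (1 : ℝ)) :
    {z : ℂ | ∃ r : ℝ, 1 < r ∧ z = (r:ℂ) * circlePoint α} ⊆ {z : ℂ | 1 < ‖z‖} := by
  rintro v ⟨r, hr, rfl⟩
  show 1 < ‖_‖
  rw [norm_mul, Complex.norm_real, Real.norm_eq_abs, abs_circlePoint, mul_one, abs_of_pos (by linarith)]
  exact hr

private lemma isPreconnected_extRay (Ψ : ℂ → ℂ)
    (hd : DifferentiableOn ℂ Ψ {z : ℂ | 1 < ‖z‖}) (α : AddCircle (1 : ℝ)) :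
    IsPreconnected (extRay Ψ α) := by
  have h1 : {z : ℂ | ∃ r : ℝ, 1 < r ∧ z = (r:ℂ) * circlePoint α}
      = (fun r : ℝ => (r:ℂ) * circlePoint α) '' Ioi 1 := by
    ext v
    constructor
    · rintro ⟨r, hr, rfl⟩; exact ⟨r, hr, rfl⟩
    · rintro ⟨r, hr, rfl⟩; exact ⟨r, hr, rfl⟩
  have h2 : IsPreconnected {z : ℂ | ∃ r : ℝ, 1 < r ∧ z = (r:ℂ) * circlePoint α} := by
    rw [h1]
    exact isPreconnected_Ioi.image _ ((Complex.continuous_ofReal.mul continuous_const).continuousOn)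
  exact h2.image _ (hd.continuousOn.mono (raySet_subset_D α))

private lemma extRay_disjoint {Ψ : ℂ → ℂ} (hinj : InjOn Ψ {z : ℂ | 1 < ‖z‖})
    {α β : AddCircle (1 : ℝ)} {y : ℂ} (hy : y ∈ extRay Ψ α) (hy' : y ∈ extRay Ψ β) : α = β := by
  obtain ⟨v, hv, rfl⟩ := hy
  obtain ⟨v', hv', hvv⟩ := hy'
  have heq : v' = v := hinj (raySet_subset_D β hv') (raySet_subset_D α hv) hvv
  obtain ⟨r, hr, rfl⟩ := hv
  obtain ⟨s, hs, hseq⟩ := hv'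
  rw [hseq] at heq
  have habs : s = r := by
    have h := congrArg norm heq
    rwa [norm_mul, norm_mul, Complex.norm_real, Complex.norm_real, Real.norm_eq_abs, Real.norm_eq_abs, abs_circlePoint,
      abs_circlePoint, mul_one, mul_one, abs_of_pos (by linarith), abs_of_pos (by linarith)] at h
  rw [habs] at heq
  have hr0 : ((r:ℝ):ℂ) ≠ 0 := by
    simp only [ne_eq, Complex.ofReal_eq_zero]
    linarith
  exact (circlePoint_injective (mul_left_cancel₀ hr0 heq)).symm

private lemma principalSet_nonempty (Q : Set ℂ) (hQ : Unshielded Q) (Ψ : ℂ → ℂ)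
    (hΨ : RiemannMap Q Ψ) (θ : AddCircle (1 : ℝ)) : (principalSet Ψ θ).Nonempty := by
  obtain ⟨hQcomp, -, -⟩ := hQ
  obtain ⟨hd, hbij⟩ := hΨ
  set D : Set ℂ := {z : ℂ | 1 < ‖z‖} with hDdef
  have hDopen : IsOpen D := isOpen_lt continuous_const continuous_norm
  have hDconn : IsPreconnected D := isPreconnected_extSet zero_le_one
  have hBopen : IsOpen (basin Q) := isOpen_basin hQcomp.isClosed
  have han : AnalyticOnNhd ℂ Ψ D := hd.analyticOnNhd hDopen
  have h2D : ((2:ℝ):ℂ) ∈ D := by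
    simp only [hDdef, mem_setOf_eq, Complex.norm_real, Real.norm_eq_abs]
    rw [abs_of_pos]; norm_num; norm_num
  have h3D : ((3:ℝ):ℂ) ∈ D := by
    simp only [hDdef, mem_setOf_eq, Complex.norm_real, Real.norm_eq_abs]
    rw [abs_of_pos]; norm_num; norm_num
  have hopen : ∀ s ⊆ D, IsOpen s → IsOpen (Ψ '' s) := by
    rcases han.is_constant_or_isOpen hDconn with ⟨w, hw⟩ | h
    · exfalso
      have h23 : ((2:ℝ):ℂ) = ((3:ℝ):ℂ) :=
        hbij.injOn h2D h3D (by rw [hw _ h2D, hw _ h3D])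
      norm_num at h23
    · exact h
  set f : ℂ → ℂ := Function.invFunOn Ψ D with hfdef
  have hright : ∀ w ∈ basin Q, Ψ (f w) = w := fun w hw =>
    Function.invFunOn_eq (hbij.surjOn hw)
  have hmemD : ∀ w ∈ basin Q, f w ∈ D := fun w hw =>
    Function.invFunOn_mem (hbij.surjOn hw)
  have hleft : ∀ v ∈ D, f (Ψ v) = v := fun v hv =>
    hbij.injOn (hmemD _ (hbij.mapsTo hv)) hv (hright _ (hbij.mapsTo hv))
  have hfc : ContinuousOn f (basin Q) := by
    rw [_root_.continuousOn_iff']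
    intro t ht
    refine ⟨Ψ '' (t ∩ D), hopen _ inter_subset_right (ht.inter hDopen), ?_⟩
    ext w
    constructor
    · rintro ⟨hwt, hwb⟩
      exact ⟨⟨f w, ⟨hwt, hmemD w hwb⟩, hright w hwb⟩, hwb⟩
    · rintro ⟨⟨v, ⟨hvt, hvD⟩, rfl⟩, hwb⟩
      refine ⟨?_, hwb⟩
      rw [mem_preimage, hleft v hvD]
      exact hvt
  have hcont : ∀ w ∈ basin Q, ContinuousAt f w := fun w hw =>
    hfc.continuousAt (hBopen.mem_nhds hw)
  have hdiff1 : ∀ w ∈ basin Q, deriv Ψ (f w) ≠ 0 → DifferentiableAt ℂ f w := by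
    intro w hw hder
    have hΨda : HasDerivAt Ψ (deriv Ψ (f w)) (f w) :=
      (hd.differentiableAt (hDopen.mem_nhds (hmemD w hw))).hasDerivAt
    exact (HasDerivAt.of_local_left_inverse (hcont w hw) hΨda hder
      (Filter.eventually_of_mem (hBopen.mem_nhds hw) fun y hy => hright y hy)).differentiableAt
  have hdiff : DifferentiableOn ℂ f (basin Q) := by
    intro w hw
    by_cases hder : deriv Ψ (f w) = 0
    case neg => exact (hdiff1 w hw hder).differentiableWithinAt
    have hfw : f w ∈ D := hmemD w hw
    rcases (han.deriv (f w) hfw).eventually_eq_zero_or_eventually_ne_zero with hev | hev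
    · exfalso
      have hcomb : ∀ᶠ v in 𝓝 (f w), v ∈ D ∧ deriv Ψ v = 0 :=
        (hDopen.eventually_mem hfw).and hev
      rcases Metric.eventually_nhds_iff.1 hcomb with ⟨ε, hε, hball⟩
      have hballD : Metric.ball (f w) ε ⊆ D := fun x hx => (hball (mem_ball.1 hx)).1
      have hconst : Ψ (f w) = Ψ (f w + ((ε/2 : ℝ):ℂ)) := by
        apply (convex_ball (f w) ε).is_const_of_fderivWithin_eq_zero
          (hd.mono hballD)
        · intro x hx
          have hx0 : deriv Ψ x = 0 := (hball (mem_ball.1 hx)).2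
          have hdAt : DifferentiableAt ℂ Ψ x :=
            hd.differentiableAt (hDopen.mem_nhds (hballD hx))
          have hF : HasFDerivAt Ψ (0 : ℂ →L[ℂ] ℂ) x := by
            have h := hdAt.hasDerivAt
            rw [hx0] at h
            have h2 := h.hasFDerivAt
            have h3 : (ContinuousLinearMap.toSpanSingleton ℂ (0:ℂ)) = 0 := by
              ext; simp
            rwa [h3] at h2
          rw [hF.hasFDerivWithinAt.fderivWithin (isOpen_ball.uniqueDiffWithinAt hx)]
        · exact mem_ball_self hε
        · rw [mem_ball_iff_norm]
          simp only [add_sub_cancel_left]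
          rw [Complex.norm_real, Real.norm_eq_abs, abs_of_pos (by linarith)]
          linarith
      have h1 : f w ∈ D := hfw
      have h2 : f w + ((ε/2 : ℝ):ℂ) ∈ D := hballD (by
        rw [mem_ball_iff_norm]
        simp only [add_sub_cancel_left]
        rw [Complex.norm_real, Real.norm_eq_abs, abs_of_pos (by linarith)]
        linarith)
      have := hbij.injOn h1 h2 hconst
      have h0 : ((ε/2 : ℝ):ℂ) = 0 := (left_eq_add.1 this)
      rw [Complex.ofReal_eq_zero] at h0
      linarith
    · have hne' := eventually_nhdsWithin_iff.1 hev
      have hpunct : ∀ᶠ y in 𝓝[≠] w, DifferentiableAt ℂ f y := by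
        rw [eventually_nhdsWithin_iff]
        filter_upwards [hBopen.eventually_mem hw, (hcont w hw).eventually hne'] with
          y hy1 hy2 hy3
        refine hdiff1 y hy1 (hy2 ?_)
        intro hEq
        apply hy3
        rw [mem_singleton_iff] at hEq ⊢
        rw [← hright y hy1, hEq, hright w hw]
      exact (Complex.analyticAt_of_differentiable_on_punctured_nhds_of_continuousAt hpunct
        (hcont w hw)).differentiableAt.differentiableWithinAt
  -- the radial sequence
  have hc1 : ‖circlePoint θ‖ = 1 := abs_circlePoint θ
  have hc0 : circlePoint θ ≠ 0 := by
    intro h; rw [h] at hc1; simp at hc1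
  set zs : ℕ → ℂ := fun n => (((1:ℝ) + ((n:ℝ)+1)⁻¹ : ℝ) : ℂ) * circlePoint θ with hzs
  have hr1 : ∀ n : ℕ, (1:ℝ) < 1 + ((n:ℝ)+1)⁻¹ := fun n =>
    lt_add_of_pos_right 1 (by positivity)
  have hzD : ∀ n, zs n ∈ D := by
    intro n
    show 1 < ‖_‖
    rw [norm_mul, Complex.norm_real, Real.norm_eq_abs, hc1, mul_one, abs_of_pos (by positivity)]
    exact hr1 n
  have hzray : ∀ n, zs n ∈ {z : ℂ | ∃ r : ℝ, 1 < r ∧ z = (r:ℂ) * circlePoint θ} :=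
    fun n => ⟨_, hr1 n, rfl⟩
  have hztend : Tendsto zs atTop (𝓝 (circlePoint θ)) := by
    have h1 : Tendsto (fun n : ℕ => (1:ℝ) + ((n:ℝ)+1)⁻¹) atTop (𝓝 1) := by
      have h0 := tendsto_one_div_add_atTop_nhds_zero_nat (𝕜 := ℝ)
      simp only [one_div] at h0
      simpa using tendsto_const_nhds.add h0
    have h2 : Tendsto (fun n : ℕ => (((1:ℝ) + ((n:ℝ)+1)⁻¹ : ℝ) : ℂ)) atTop (𝓝 ((1:ℝ):ℂ)) :=
      (Complex.continuous_ofReal.tendsto _).comp h1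
    have h3 := h2.mul (tendsto_const_nhds (x := circlePoint θ))
    rw [hzs]
    simpa only [Complex.ofReal_one, one_mul] using h3
  set u : ℕ → ℂ := fun n => Ψ (zs n) with hu
  have hub : ∀ n, u n ∈ basin Q := fun n => hbij.mapsTo (hzD n)
  have huray : ∀ n, u n ∈ extRay Ψ θ := fun n => ⟨zs n, hzray n, rfl⟩
  by_cases hbig : Tendsto (fun n => ‖u n‖) atTop atTop
  case neg =>
    obtain ⟨M, hM⟩ : ∃ M : ℝ, ∃ᶠ n in atTop, ‖u n‖ < M := by
      rw [Filter.tendsto_atTop] at hbig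
      push_neg at hbig
      obtain ⟨M, hM⟩ := hbig
      exact ⟨M, (Filter.not_eventually.1 hM).mono fun n hn => not_not.1 hn⟩
    obtain ⟨φ, hφmono, hφ⟩ := Filter.extraction_of_frequently_atTop hM
    have hmemball : ∀ k, u (φ k) ∈ closedBall (0:ℂ) M := fun k => by
      rw [mem_closedBall_zero_iff]
      exact (hφ k).le
    obtain ⟨w, -, ψ, hψmono, hwtend⟩ :=
      (isCompact_closedBall (0:ℂ) M).tendsto_subseq hmemball
    refine ⟨w, ?_, ?_⟩
    · exact mem_closure_of_tendsto hwtend (Filter.Eventually.of_forall fun k => huray _)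
    · intro hwray
      obtain ⟨v, hv, hvw⟩ := hwray
      have hvD : v ∈ D := raySet_subset_D θ hv
      have hwb : w ∈ basin Q := hvw ▸ hbij.mapsTo hvD
      have ht1 : Tendsto (fun k => f (u (φ (ψ k)))) atTop (𝓝 (f w)) :=
        (hcont w hwb).tendsto.comp hwtend
      have ht2 : Tendsto (fun k => f (u (φ (ψ k)))) atTop (𝓝 (circlePoint θ)) := by
        have heq : ∀ k, f (u (φ (ψ k))) = zs (φ (ψ k)) := fun k => hleft _ (hzD _)
        rw [funext heq]
        exact hztend.comp (hφmono.comp hψmono).tendsto_atTop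
      have hfwc : f w = circlePoint θ := tendsto_nhds_unique ht1 ht2
      have hgt := hmemD w hwb
      rw [hDdef, mem_setOf_eq, hfwc, hc1] at hgt
      exact lt_irrefl 1 hgt
  case pos =>
    exfalso
    obtain ⟨R, hR⟩ := (Metric.isBounded_iff_subset_closedBall 0).1 hQcomp.isBounded
    set R₀ : ℝ := max R 1 with hR₀
    have hR₀1 : (1:ℝ) ≤ R₀ := le_max_right _ _
    have hR₀pos : (0:ℝ) < R₀ := lt_of_lt_of_le one_pos hR₀1
    have hQabs : ∀ x ∈ Q, ‖x‖ ≤ R₀ := by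
      intro x hx
      have h := hR hx
      rw [mem_closedBall_zero_iff] at h
      exact le_trans h (le_max_left _ _)
    have hExt : ∀ v : ℂ, R₀ < ‖v‖ → v ∈ basin Q := by
      intro v hv
      have hvQ : v ∉ Q := fun h => absurd hv (not_lt.2 (hQabs v h))
      refine ⟨hvQ, fun hbdd => ?_⟩
      have hsub : {x : ℂ | R₀ < ‖x‖} ⊆ connectedComponentIn Qᶜ v := by
        refine (isPreconnected_extSet hR₀pos.le).subset_connectedComponentIn hv ?_
        exact fun x hx hxQ => absurd hx (not_lt.2 (hQabs x hxQ))
      obtain ⟨C, hC⟩ := isBounded_iff_forall_norm_le.1 (hbdd.subset hsub)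
      have hCx := hC (((max C R₀ + 1 : ℝ)):ℂ) (by
        show R₀ < ‖_‖
        rw [Complex.norm_real, Real.norm_eq_abs, abs_of_pos (by nlinarith [le_max_right C R₀])]
        nlinarith [le_max_right C R₀])
      rw [Complex.norm_real, Real.norm_eq_abs,
        abs_of_pos (by nlinarith [le_max_right C R₀])] at hCx
      nlinarith [le_max_left C R₀]
    set G : ℂ → ℂ := fun ζ => (f ζ⁻¹)⁻¹ with hG
    set P : Set ℂ := Metric.ball (0:ℂ) R₀⁻¹ with hP
    have hinvmem : ∀ ζ : ℂ, ζ ∈ P → ζ ≠ 0 → ζ⁻¹ ∈ basin Q := by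
      intro ζ hζ h0
      apply hExt
      rw [norm_inv]
      rw [hP, mem_ball_zero_iff] at hζ
      have habs : 0 < ‖ζ‖ := norm_pos_iff.2 h0
      have hmul : R₀ * ‖ζ‖ < 1 := by
        calc R₀ * ‖ζ‖ < R₀ * R₀⁻¹ := by
              exact mul_lt_mul_of_pos_left hζ hR₀pos
        _ = 1 := mul_inv_cancel₀ hR₀pos.ne'
      rw [← one_div]
      rw [lt_div_iff₀ habs]
      linarith
    have hGd : DifferentiableOn ℂ G (P \ {0}) := by
      rintro ζ ⟨hζP, hζ0'⟩
      have hζ0 : ζ ≠ 0 := by simpa using hζ0'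
      have hmem : ζ⁻¹ ∈ basin Q := hinvmem ζ hζP hζ0
      have h1 : DifferentiableAt ℂ (fun x : ℂ => x⁻¹) ζ := differentiableAt_inv_iff.2 hζ0
      have h2 : DifferentiableAt ℂ f ζ⁻¹ := (hdiff _ hmem).differentiableAt (hBopen.mem_nhds hmem)
      have h3 : f ζ⁻¹ ≠ 0 := by
        intro h
        have hm := hmemD _ hmem
        rw [hDdef, mem_setOf_eq, h] at hm
        simp only [norm_zero] at hm
        exact absurd hm (by norm_num)
      exact ((h2.comp ζ h1).inv h3).differentiableWithinAt
    have hGbdd : BddAbove (norm ∘ G '' (P \ {0})) := by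
      refine ⟨1, ?_⟩
      rintro y ⟨ζ, ⟨hζP, hζ0'⟩, rfl⟩
      have hζ0 : ζ ≠ 0 := by simpa using hζ0'
      have h1 : 1 < ‖f ζ⁻¹‖ := hmemD _ (hinvmem ζ hζP hζ0)
      show ‖G ζ‖ ≤ 1
      rw [hG]
      simp only [norm_inv]
      exact inv_le_one_of_one_le₀ h1.le
    set L : ℂ := limUnder (𝓝[≠] (0:ℂ)) G with hL
    set F : ℂ → ℂ := Function.update G 0 L with hFdef
    have hFd : DifferentiableOn ℂ F P :=
      Complex.differentiableOn_update_limUnder_of_bddAbove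
        (Metric.ball_mem_nhds 0 (inv_pos.2 hR₀pos)) hGd hGbdd
    have h0P : (0:ℂ) ∈ P := Metric.mem_ball_self (inv_pos.2 hR₀pos)
    have hFc : ContinuousAt F 0 :=
      (hFd.differentiableAt (isOpen_ball.mem_nhds h0P)).continuousAt
    have hinv0 : Tendsto (fun n => (u n)⁻¹) atTop (𝓝 0) := by
      rw [tendsto_zero_iff_norm_tendsto_zero]
      simp only [norm_inv]
      exact hbig.inv_tendsto_atTop
    have hbign : ∀ᶠ n in atTop, R₀ < ‖u n‖ := hbig.eventually_gt_atTop R₀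
    have hcomp : Tendsto (fun n => F ((u n)⁻¹)) atTop (𝓝 (F 0)) := hFc.tendsto.comp hinv0
    have hEq : ∀ᶠ n in atTop, F ((u n)⁻¹) = (zs n)⁻¹ := by
      filter_upwards [hbign] with n hn
      have hun0 : u n ≠ 0 := by
        intro h
        rw [h] at hn
        simp at hn
        linarith
      have hinvne : (u n)⁻¹ ≠ 0 := inv_ne_zero hun0
      rw [hFdef]
      rw [Function.update_of_ne hinvne]
      show (f ((u n)⁻¹)⁻¹)⁻¹ = (zs n)⁻¹
      rw [inv_inv]
      show (f (Ψ (zs n)))⁻¹ = (zs n)⁻¹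
      rw [hleft _ (hzD n)]
    have hzinv : Tendsto (fun n => (zs n)⁻¹) atTop (𝓝 (circlePoint θ)⁻¹) := hztend.inv₀ hc0
    have hF0 : F 0 = (circlePoint θ)⁻¹ :=
      tendsto_nhds_unique ((Filter.tendsto_congr' hEq).1 hcomp) hzinv
    have hF0abs : ‖F 0‖ = 1 := by rw [hF0, norm_inv, hc1, inv_one]
    have hmax : IsMaxOn (norm ∘ F) P 0 := by
      intro ζ hζ
      simp only [Function.comp_apply, mem_setOf_eq]
      by_cases hζ0 : ζ = 0
      · rw [hζ0]
      · have h1 : 1 < ‖f ζ⁻¹‖ := hmemD _ (hinvmem ζ hζ hζ0)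
        have hFG : F ζ = G ζ := Function.update_of_ne hζ0 _ _
        rw [hFG]
        have : ‖G ζ‖ ≤ 1 := by
          rw [hG]
          simp only [norm_inv]
          exact inv_le_one_of_one_le₀ h1.le
        rw [hF0abs]
        exact this
    have heqF := Complex.eqOn_of_isPreconnected_of_isMaxOn_norm
      (convex_ball (0:ℂ) R₀⁻¹).isPreconnected isOpen_ball hFd h0P hmax
    set ζ₀ : ℂ := ((R₀⁻¹ / 2 : ℝ) : ℂ) with hζ₀def
    have hζ₀P : ζ₀ ∈ P := by
      rw [hP, mem_ball_zero_iff, hζ₀def, Complex.norm_real, Real.norm_eq_abs,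
        abs_of_pos (by positivity)]
      have : (0:ℝ) < R₀⁻¹ := inv_pos.2 hR₀pos
      linarith
    have hζ₀0 : ζ₀ ≠ 0 := by
      rw [hζ₀def]
      simp only [ne_eq, Complex.ofReal_eq_zero]
      positivity
    have hFζ₀ : F ζ₀ = F 0 := heqF hζ₀P
    have h1 : 1 < ‖f ζ₀⁻¹‖ := hmemD _ (hinvmem ζ₀ hζ₀P hζ₀0)
    have habs1 : ‖F ζ₀‖ = 1 := by rw [hFζ₀]; exact hF0abs
    rw [show F ζ₀ = G ζ₀ from Function.update_of_ne hζ₀0 _ _] at habs1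
    rw [hG] at habs1
    simp only [norm_inv] at habs1
    have : ‖f ζ₀⁻¹‖ = 1 := by
      rw [← inv_inv (‖f ζ₀⁻¹‖), habs1, inv_one]
    linarith


/-- If a ray-compactum `K₁` ray-separates `A` and `B`, and a ray-compactum `K₂`
disjoint from `B` ray-separates `A` and `K₁`, then `K₂` ray-separates `A` and `B`. -/
theorem raySeparates_of_raySeparates_middle (Q : Set ℂ) (hQ : Unshielded Q)
    (Ψ : ℂ → ℂ) (hΨ : RiemannMap Q Ψ)
    (A B : Set ℂ) (hA : A ⊆ Q) (hB : B ⊆ Q)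
    (K₁ K₂ : RayCompactum Q Ψ)
    (h₁ : RaySeparates K₁ A B)
    (h₂B : Disjoint K₂.carrier B)
    (h₂ : RaySeparates K₂ A K₁.carrier) :
    RaySeparates K₂ A B := by
  obtain ⟨h₁K, h₁sep⟩ := h₁
  obtain ⟨h₂K, h₂sep⟩ := h₂
  have hQfr : Q = frontier (basin Q) := hQ.2.2
  have hQcl : Q ⊆ closure (basin Q) := by
    intro x hx
    rw [hQfr] at hx
    exact frontier_subset_closure hx
  have hnotQ : ∀ x ∈ basin Q, x ∉ Q := fun x hx => hx.1
  have hrayb : ∀ α : AddCircle (1:ℝ), extRay Ψ α ⊆ basin Q := by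
    rintro α w ⟨v, hv, rfl⟩
    exact hΨ.2.mapsTo (raySet_subset_D α hv)
  constructor
  · apply Set.eq_empty_iff_forall_notMem.2
    rintro x ⟨hx2, hxAB⟩
    rcases hxAB with hxA | hxB
    · exact Set.eq_empty_iff_forall_notMem.1 h₂K x ⟨hx2, Or.inl hxA⟩
    · exact Set.disjoint_left.1 h₂B hx2 hxB
  · rintro z hz ⟨⟨a, haU, haA⟩, b, hbU, hbB⟩
    have hUsub : connectedComponentIn (closure (basin Q) \ K₂.tilde) z
        ⊆ closure (basin Q) \ K₂.tilde := connectedComponentIn_subset _ _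
    have hUK₁ : connectedComponentIn (closure (basin Q) \ K₂.tilde) z ∩ K₁.carrier = ∅ := by
      rw [Set.eq_empty_iff_forall_notMem]
      rintro p ⟨hpU, hpK⟩
      exact h₂sep z hz ⟨⟨a, haU, haA⟩, p, hpU, hpK⟩
    by_cases hUt : connectedComponentIn (closure (basin Q) \ K₂.tilde) z ∩ K₁.tilde = ∅
    · have hU1 : connectedComponentIn (closure (basin Q) \ K₂.tilde) z
          ⊆ closure (basin Q) \ K₁.tilde := fun y hy =>
        ⟨(hUsub hy).1, fun hyt => Set.eq_empty_iff_forall_notMem.1 hUt y ⟨hy, hyt⟩⟩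
      have haS₁ : a ∈ closure (basin Q) \ K₁.tilde := hU1 haU
      exact h₁sep a haS₁ ⟨⟨a, mem_connectedComponentIn haS₁, haA⟩,
        b, isPreconnected_connectedComponentIn.subset_connectedComponentIn haU hU1 hbU, hbB⟩
    · obtain ⟨w, hwU, hwt⟩ := Set.nonempty_iff_ne_empty.2 hUt
      have hwC : w ∉ K₁.carrier := fun h =>
        Set.eq_empty_iff_forall_notMem.1 hUK₁ w ⟨hwU, h⟩
      have hwR : w ∈ ⋃ β ∈ K₁.angles, extRay Ψ β := by
        rcases hwt with h | h
        · exact absurd h hwC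
        · exact h
      rw [Set.mem_iUnion₂] at hwR
      obtain ⟨α, hα, hwα⟩ := hwR
      have hαK₂ : α ∉ K₂.angles := by
        intro hmem
        exact (hUsub hwU).2 (Or.inr (Set.mem_iUnion₂.2 ⟨α, hmem, hwα⟩))
      have hrayS₂ : extRay Ψ α ⊆ closure (basin Q) \ K₂.tilde := by
        intro y hy
        refine ⟨subset_closure (hrayb α hy), ?_⟩
        rintro (hyC | hyR)
        · exact hnotQ y (hrayb α hy) (K₂.carrier_subset hyC)
        · rw [Set.mem_iUnion₂] at hyR
          obtain ⟨β, hβ, hyβ⟩ := hyR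
          exact hαK₂ ((extRay_disjoint hΨ.2.injOn hy hyβ) ▸ hβ)
      have hrayU : extRay Ψ α ⊆ connectedComponentIn (closure (basin Q) \ K₂.tilde) z := by
        have h1 := (isPreconnected_extRay Ψ hΨ.1 α).subset_connectedComponentIn hwα hrayS₂
        rwa [connectedComponentIn_eq hwU]
      obtain ⟨p, hpcl, hpray⟩ := principalSet_nonempty Q hQ Ψ hΨ α
      have hpK₁ : p ∈ K₁.carrier := K₁.principal_subset α hα ⟨hpcl, hpray⟩
      have hpQ : p ∈ Q := K₁.carrier_subset hpK₁
      have hpS₂ : p ∈ closure (basin Q) \ K₂.tilde := by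
        refine ⟨hQcl hpQ, ?_⟩
        rintro (hpC | hpR)
        · exact Set.eq_empty_iff_forall_notMem.1 h₂K p ⟨hpC, Or.inr hpK₁⟩
        · rw [Set.mem_iUnion₂] at hpR
          obtain ⟨β, hβ, hpβ⟩ := hpR
          exact hnotQ p (hrayb β hpβ) hpQ
      have hzU : z ∈ connectedComponentIn (closure (basin Q) \ K₂.tilde) z :=
        mem_connectedComponentIn hz
      have hins : IsPreconnected
          (insert p (connectedComponentIn (closure (basin Q) \ K₂.tilde) z)) := by
        refine IsPreconnected.subset_closure isPreconnected_connectedComponentIn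
          (subset_insert _ _) ?_
        intro q hq
        rcases Set.mem_insert_iff.1 hq with rfl | hqU
        · exact closure_mono hrayU hpcl
        · exact subset_closure hqU
      have hpU : p ∈ connectedComponentIn (closure (basin Q) \ K₂.tilde) z := by
        have hsub := hins.subset_connectedComponentIn
          (Set.mem_insert_iff.2 (Or.inr hzU))
          (fun q hq => by
            rcases Set.mem_insert_iff.1 hq with rfl | hqU
            exacts [hpS₂, hUsub hqU])
        exact hsub (Set.mem_insert _ _)
      exact Set.eq_empty_iff_forall_notMem.1 hUK₁ p ⟨hpU, hpK₁⟩


end
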